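/- Realignment of a product of density matrices: If ρ_A is a density matrix on ℂ^{d_A} and ρ_B is a density matrix on ℂ^{d_B}, then the trace norm of the realignment of their product satisfies ‖R(ρ_A ⊗ ρ_B)‖_tr ≤ 1. -/

import Mathlib

open Matrix Kronecker ComplexOrder

/-- Trace norm `‖X‖_tr = Tr √(X Xᴴ)`. -/
noncomputable def traceNorm {m n : Type*} [Fintype m] [Fintype n] [DecidableEq m]
    (X : Matrix m n ℂ) : ℝ :=
  (((Matrix.posSemidef_self_mul_conjTranspose X).1.eigenvectorUnitary : Matrix m m ℂ) *
      diagonal (fun i => ((Real.sqrt ((Matrix.posSemidef_self_mul_conjTranspose X).1.eigenvalues i) : ℝ) : ℂ)) *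
      (star (Matrix.posSemidef_self_mul_conjTranspose X).1.eigenvectorUnitary : Matrix m m ℂ)).trace.re

/-- A density matrix: positive semidefinite with trace 1. -/
def IsDensityMatrix {n : Type*} [Fintype n] (ρ : Matrix n n ℂ) : Prop :=
  ρ.PosSemidef ∧ ρ.trace = 1

/-- The realignment map: `R(ρ)_{(i,j),(k,l)} = ρ_{(i,k),(j,l)}`. -/
def realign {dA dB : ℕ} (ρ : Matrix (Fin dA × Fin dB) (Fin dA × Fin dB) ℂ) :
    Matrix (Fin dA × Fin dA) (Fin dB × Fin dB) ℂ :=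
  fun p q => ρ (p.1, q.1) (p.2, q.2)

/-- Partial transpose on the second subsystem: `(ρ^{T₂})_{(i,k),(j,l)} = ρ_{(i,l),(j,k)}`. -/
def ptranspose2 {d : ℕ} (ρ : Matrix (Fin d × Fin d) (Fin d × Fin d) ℂ) :
    Matrix (Fin d × Fin d) (Fin d × Fin d) ℂ :=
  fun p q => ρ (p.1, q.2) (q.1, p.2)

/-- The swap (exchange) operator `F_{(i,k),(j,l)} = δ_{il} δ_{kj}`. -/
def swapOp (d : ℕ) : Matrix (Fin d × Fin d) (Fin d × Fin d) ℂ :=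
  fun p q => if p.1 = q.2 ∧ p.2 = q.1 then 1 else 0

/-- The unnormalized maximally entangled projector `(|Ω⟩⟨Ω|)_{(i,k),(j,l)} = δ_{ik} δ_{jl}`. -/
def omegaProj (d : ℕ) : Matrix (Fin d × Fin d) (Fin d × Fin d) ℂ :=
  fun p q => if p.1 = p.2 ∧ q.1 = q.2 then 1 else 0

/-- Separability: `ρ` is a finite convex combination of products of density matrices. -/
def IsSeparableState {dA dB : ℕ} (ρ : Matrix (Fin dA × Fin dB) (Fin dA × Fin dB) ℂ) : Prop :=
  ∃ (m : ℕ) (p : Fin m → ℝ) (σ : Fin m → Matrix (Fin dA) (Fin dA) ℂ)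
    (τ : Fin m → Matrix (Fin dB) (Fin dB) ℂ),
    (∀ k, 0 ≤ p k) ∧ (∑ k, p k = 1) ∧ (∀ k, IsDensityMatrix (σ k)) ∧
    (∀ k, IsDensityMatrix (τ k)) ∧ ρ = ∑ k, (p k : ℂ) • (σ k ⊗ₖ τ k)

/-- Frobenius norm squared of a density matrix is at most 1. -/
lemma aux_sum_normSq_le_one {n : Type*} [Fintype n] [DecidableEq n] {ρ : Matrix n n ℂ}
    (h : ρ.PosSemidef) (ht : ρ.trace = 1) :
    ∑ i, ∑ j, Complex.normSq (ρ i j) ≤ 1 := by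
  classical
  have hH := h.1
  set U : Matrix n n ℂ := (hH.eigenvectorUnitary : Matrix n n ℂ) with hUdef
  have hU : star U * U = 1 := (Matrix.mem_unitaryGroup_iff').mp hH.eigenvectorUnitary.2
  set D : Matrix n n ℂ := Matrix.diagonal (RCLike.ofReal ∘ hH.eigenvalues) with hDdef
  have hspec : ρ = U * D * star U := hH.spectral_theorem
  -- sum of eigenvalues is 1
  have htr : ∑ i, hH.eigenvalues i = 1 := by
    have h1 : ρ.trace = ∑ i, (hH.eigenvalues i : ℂ) := by
      conv_lhs => rw [hspec]
      rw [Matrix.trace_mul_cycle, hU, one_mul, hDdef, Matrix.trace_diagonal]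
      rfl
    have h2 : ((∑ i, hH.eigenvalues i : ℝ) : ℂ) = 1 := by
      rw [← ht, h1]; push_cast; rfl
    exact_mod_cast h2
  have hnonneg : ∀ i, 0 ≤ hH.eigenvalues i := fun i => h.eigenvalues_nonneg i
  have hle1 : ∀ i, hH.eigenvalues i ≤ 1 := by
    intro i
    calc hH.eigenvalues i ≤ ∑ j, hH.eigenvalues j :=
          Finset.single_le_sum (fun j _ => hnonneg j) (Finset.mem_univ i)
      _ = 1 := htr
  -- Frobenius norm squared equals trace of ρ*ρ
  have hfrob : (ρ * ρᴴ).trace = ((∑ i, ∑ j, Complex.normSq (ρ i j) : ℝ) : ℂ) := by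
    simp only [Matrix.trace, Matrix.diag, Matrix.mul_apply, Matrix.conjTranspose_apply,
      Complex.star_def, Complex.mul_conj]
    push_cast
    rfl
  have hsq : (ρ * ρᴴ).trace = ((∑ i, (hH.eigenvalues i)^2 : ℝ) : ℂ) := by
    rw [hH.eq]  -- ρᴴ = ρ
    conv_lhs => rw [hspec]
    have heq : star U * (U * (D * star U)) = D * star U := by
      rw [← Matrix.mul_assoc, hU, one_mul]
    simp only [Matrix.mul_assoc]
    rw [heq, Matrix.trace_mul_comm U (D * (D * star U))]
    simp only [Matrix.mul_assoc]
    rw [hU, mul_one, hDdef, Matrix.diagonal_mul_diagonal, Matrix.trace_diagonal]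
    push_cast
    simp [sq]
  have hkey : ∑ i, ∑ j, Complex.normSq (ρ i j) = ∑ i, (hH.eigenvalues i)^2 :=
    Complex.ofReal_inj.mp (hfrob.symm.trans hsq)
  rw [hkey]
  calc ∑ i, (hH.eigenvalues i)^2 ≤ ∑ i, hH.eigenvalues i :=
        Finset.sum_le_sum (fun i _ => by nlinarith [hnonneg i, hle1 i])
    _ = 1 := htr

/-- **Realignment of a product of density matrices** has trace norm at most 1. -/
theorem traceNorm_realign_kron_le_one {dA dB : ℕ}
    (ρA : Matrix (Fin dA) (Fin dA) ℂ) (ρB : Matrix (Fin dB) (Fin dB) ℂ)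
    (hA : IsDensityMatrix ρA) (hB : IsDensityMatrix ρB) :
    traceNorm (realign (ρA ⊗ₖ ρB)) ≤ 1 := by
  classical
  set X := realign (ρA ⊗ₖ ρB) with hX
  set a : Matrix (Fin dA × Fin dA) Unit ℂ := fun p _ => ρA p.1 p.2 with ha
  set b : Matrix (Fin dB × Fin dB) Unit ℂ := fun q _ => ρB q.1 q.2 with hb
  set α : ℝ := ∑ p : Fin dA × Fin dA, Complex.normSq (ρA p.1 p.2) with hα
  set β : ℝ := ∑ q : Fin dB × Fin dB, Complex.normSq (ρB q.1 q.2) with hβ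
  have hαnn : 0 ≤ α := Finset.sum_nonneg fun _ _ => Complex.normSq_nonneg _
  have hβnn : 0 ≤ β := Finset.sum_nonneg fun _ _ => Complex.normSq_nonneg _
  have hαpos : 0 < α := by
    rcases lt_or_eq_of_le hαnn with h | h
    · exact h
    · exfalso
      have hzero : ∀ p : Fin dA × Fin dA, Complex.normSq (ρA p.1 p.2) = 0 := by
        have := (Finset.sum_eq_zero_iff_of_nonneg
          (fun q (_ : q ∈ Finset.univ) => Complex.normSq_nonneg (ρA q.1 q.2))).mp h.symm
        exact fun p => this p (Finset.mem_univ p)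
      have h0 : ρA.trace = 0 := by
        simp only [Matrix.trace, Matrix.diag]
        exact Finset.sum_eq_zero fun i _ => Complex.normSq_eq_zero.mp (hzero (i, i))
      rw [hA.2] at h0
      exact one_ne_zero h0
  have hαle : α ≤ 1 := by
    have h1 := aux_sum_normSq_le_one hA.1 hA.2
    rw [hα, Fintype.sum_prod_type]
    exact h1
  have hβle : β ≤ 1 := by
    have h1 := aux_sum_normSq_le_one hB.1 hB.2
    rw [hβ, Fintype.sum_prod_type]
    exact h1
  -- sums of |entries|² as complex numbers
  have hbsum : ∑ q : Fin dB × Fin dB, b q () * star (b q ()) = (β : ℂ) := by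
    rw [hβ]
    push_cast
    exact Finset.sum_congr rfl fun q _ => by
      rw [hb, Complex.star_def, Complex.mul_conj]
  have hasum : ∑ p : Fin dA × Fin dA, star (a p ()) * a p () = (α : ℂ) := by
    rw [hα]
    push_cast
    exact Finset.sum_congr rfl fun p _ => by
      rw [ha, Complex.star_def, mul_comm, Complex.mul_conj]
  -- X Xᴴ = β • a aᴴ
  have hXab : X * Xᴴ = (β : ℂ) • (a * aᴴ) := by
    ext p p'
    simp only [Matrix.mul_apply, Matrix.conjTranspose_apply, Matrix.smul_apply, smul_eq_mul,
      Finset.univ_unique, Finset.sum_singleton]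
    have h1 : ∀ q : Fin dB × Fin dB, X p q * star (X p' q)
        = (b q () * star (b q ())) * (a p () * star (a p' ())) := by
      intro q
      have e1 : X p q = a p () * b q () := rfl
      have e2 : X p' q = a p' () * b q () := rfl
      rw [e1, e2, star_mul']
      ring
    rw [Finset.sum_congr rfl fun q _ => h1 q, ← Finset.sum_mul, hbsum]
  -- aᴴ a = α • 1
  have haa : aᴴ * a = (α : ℂ) • (1 : Matrix Unit Unit ℂ) := by
    ext ⟨⟩ ⟨⟩
    simp only [Matrix.mul_apply, Matrix.conjTranspose_apply, Matrix.smul_apply, smul_eq_mul,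
      Matrix.one_apply_eq, mul_one]
    exact hasum
  -- the square root candidate
  set t : ℝ := Real.sqrt (Real.sqrt (β / α)) with htdef
  have ht2 : t ^ 2 = Real.sqrt (β / α) := Real.sq_sqrt (Real.sqrt_nonneg _)
  have ht4 : t ^ 2 * t ^ 2 = β / α := by
    rw [ht2]; exact Real.mul_self_sqrt (by positivity)
  set S := ((t : ℂ) • a) * ((t : ℂ) • a)ᴴ with hSdef
  have hSpsd : S.PosSemidef := Matrix.posSemidef_self_mul_conjTranspose _
  have hSsmul : S = ((t ^ 2 : ℝ) : ℂ) • (a * aᴴ) := by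
    rw [hSdef, Matrix.conjTranspose_smul, Matrix.smul_mul, Matrix.mul_smul, smul_smul]
    congr 1
    rw [Complex.star_def, Complex.conj_ofReal]
    push_cast
    ring
  have hsq : S ^ 2 = X * Xᴴ := by
    rw [pow_two, hSsmul, Matrix.smul_mul, Matrix.mul_smul, smul_smul]
    have hmm : a * aᴴ * (a * aᴴ) = (α : ℂ) • (a * aᴴ) := by
      rw [Matrix.mul_assoc, ← Matrix.mul_assoc aᴴ, haa, Matrix.smul_mul, Matrix.one_mul,
        Matrix.mul_smul]
    rw [hmm, smul_smul, hXab]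
    congr 1
    have : ((t ^ 2 : ℝ) : ℂ) * ((t ^ 2 : ℝ) : ℂ) * (α : ℂ) = ((t ^ 2 * t ^ 2 * α : ℝ) : ℂ) := by
      push_cast; ring
    rw [this, ht4, div_mul_cancel₀ _ (ne_of_gt hαpos)]
  have hsqrt : S = (((Matrix.posSemidef_self_mul_conjTranspose X).1.eigenvectorUnitary : Matrix _ _ ℂ) *
      diagonal (fun i => ((Real.sqrt ((Matrix.posSemidef_self_mul_conjTranspose X).1.eigenvalues i) : ℝ) : ℂ)) *
      (star (Matrix.posSemidef_self_mul_conjTranspose X).1.eigenvectorUnitary : Matrix _ _ ℂ)) := by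
    have hP := Matrix.posSemidef_self_mul_conjTranspose X
    open scoped MatrixOrder in
    have h1 : CFC.sqrt (X * Xᴴ) = S := CFC.sqrt_unique (by rw [← hsq, pow_two]) hSpsd.nonneg
    open scoped MatrixOrder in
    rw [← h1, CFC.sqrt_eq_real_sqrt _ hP.nonneg, cfcₙ_eq_cfc, hP.1.cfc_eq]
    simp only [IsHermitian.cfc, Unitary.conjStarAlgAut_apply]
    rfl
  -- compute the trace
  have htraa : (a * aᴴ).trace = (α : ℂ) := by
    rw [Matrix.trace_mul_comm, Matrix.trace]
    simp only [Matrix.diag, Matrix.mul_apply, Matrix.conjTranspose_apply,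
      Finset.univ_unique, Finset.sum_singleton]
    rw [Subsingleton.elim (default : Unit) ()]
    exact hasum
  have htrS : S.trace = ((t ^ 2 * α : ℝ) : ℂ) := by
    rw [hSsmul, Matrix.trace_smul, htraa, smul_eq_mul]
    push_cast
    ring
  rw [traceNorm, ← hsqrt, htrS, Complex.ofReal_re]
  have hval : t ^ 2 * α = Real.sqrt β * Real.sqrt α := by
    rw [ht2, Real.sqrt_div hβnn, div_mul_eq_mul_div, mul_div_assoc, Real.div_sqrt]
  rw [hval]
  exact mul_le_one₀ (Real.sqrt_le_one.mpr hβle) (Real.sqrt_nonneg _) (Real.sqrt_le_one.mpr hαle)
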